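/- The number of permutations σ of Fin n such that for every i : Fin k and j : Fin m the cardinality of {v : Fin n | τ v = i and δ (σ v) = j} equals s' j i, is exactly (∏_i n_i !) · ∏_j ( s_j ! / ∏_i (s' j i)! ), where each factor s_j ! / ∏_i (s' j i)! is the multinomial coefficient (in particular the division is exact). (This is formula (Dtheorem2) of Theorem Dtheorem, counting |ν₀(D_n, ρ_n)|, the labeling sets with prescribed dashed-degree data.) -/
import Mathlib

open Finset Nat

section helpers

variable {α β : Type*}

/-- Permutations intertwining two functions correspond to fiberwise bijections. -/
def permCompEquiv (f g : α → β) :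
    {σ : Equiv.Perm α // ∀ a, f (σ a) = g a} ≃ ∀ b, ({a // g a = b} ≃ {a // f a = b}) where
  toFun σ b :=
    { toFun := fun a => ⟨σ.1 a.1, by rw [σ.2 a.1, a.2]⟩
      invFun := fun a => ⟨σ.1.symm a.1, by
        have := σ.2 (σ.1.symm a.1); rw [Equiv.apply_symm_apply] at this
        rw [← this, a.2]⟩
      left_inv := fun a => by simp
      right_inv := fun a => by simp }
  invFun e :=
    ⟨(Equiv.sigmaFiberEquiv g).symm.trans ((Equiv.sigmaCongrRight e).trans
      (Equiv.sigmaFiberEquiv f)), fun a => (e (g a) ⟨a, rfl⟩).2⟩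
  left_inv σ := by
    apply Subtype.ext
    ext a
    rfl
  right_inv e := by
    funext b
    apply Equiv.ext
    rintro ⟨a, rfl⟩
    rfl

lemma natCard_equiv [Finite α] [Finite β] (h : Nat.card α = Nat.card β) :
    Nat.card (α ≃ β) = (Nat.card α)! := by
  classical
  have := Fintype.ofFinite α
  have := Fintype.ofFinite β
  simp only [Nat.card_eq_fintype_card] at h ⊢
  exact Fintype.card_equiv (Fintype.equivOfCardEq h)

/-- generic decomposition of a subtype of a composed predicate as a sigma over fibers -/
def subtypeSigmaFiber {X Y : Type*} (phi : X → Y) (P : Y → Prop) :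
    {x // P (phi x)} ≃ Σ y : {y // P y}, {x // phi x = y.1} :=
  ((Equiv.sigmaFiberEquiv phi).symm.subtypeEquiv fun x => Iff.rfl).trans
    (Equiv.subtypeSigmaEquiv (fun y => {x // phi x = y}) P)

/-- Sigma fiber subtype equiv -/
def sigmaFstFiber {ι : Type*} (A : ι → Type*) (b : ι) :
    {x : Σ i, A i // x.1 = b} ≃ A b where
  toFun x := cast (congrArg A x.2) x.1.2
  invFun a := ⟨⟨b, a⟩, rfl⟩
  left_inv := by rintro ⟨⟨i, a⟩, rfl⟩; rfl
  right_inv a := rfl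

/-- The number of functions with prescribed fiber sizes is the multinomial coefficient. -/
lemma card_fiber_functions [Fintype α] [Fintype β]
    (c : β → ℕ) (h : ∑ b, c b = Fintype.card α) :
    Nat.card {f : α → β // ∀ b, Nat.card {a // f a = b} = c b} =
      Nat.multinomial Finset.univ c := by
  classical
  -- reference function with prescribed fibers
  obtain ⟨E⟩ : Nonempty (α ≃ Σ b, Fin (c b)) := by
    apply Fintype.card_eq.mp
    simp [h]
  set g₀ : α → β := fun a => (E a).1 with hg₀
  have hfib : ∀ b, Nat.card {a // g₀ a = b} = c b := by
    intro b
    have e1 : {a // g₀ a = b} ≃ {x : Σ b', Fin (c b') // x.1 = b} :=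
      E.subtypeEquiv (fun a => Iff.rfl)
    rw [Nat.card_congr (e1.trans (sigmaFstFiber _ b))]
    simp
  set P : (α → β) → Prop := fun f => ∀ b, Nat.card {a // f a = b} = c b with hP
  have hall : ∀ σ : Equiv.Perm α, P (g₀ ∘ σ) := by
    intro σ b
    have e1 : {a // g₀ (σ a) = b} ≃ {a // g₀ a = b} := σ.subtypeEquiv fun a => Iff.rfl
    exact (Nat.card_congr e1).trans (hfib b)
  have key : Equiv.Perm α ≃ Σ f : {f // P f}, {σ : Equiv.Perm α // ∀ a, g₀ (σ a) = f.1 a} :=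
    (Equiv.subtypeUnivEquiv hall).symm.trans
      ((subtypeSigmaFiber (fun σ : Equiv.Perm α => g₀ ∘ σ) P).trans
        (Equiv.sigmaCongrRight (fun f => Equiv.subtypeEquivRight (fun σ => funext_iff))))
  have hfibcard : ∀ f : {f // P f},
      Nat.card {σ : Equiv.Perm α // ∀ a, g₀ (σ a) = f.1 a} = ∏ b, (c b)! := by
    intro f
    rw [Nat.card_congr (permCompEquiv g₀ f.1), Nat.card_pi]
    refine Finset.prod_congr rfl fun b _ => ?_
    rw [natCard_equiv ((f.2 b).trans (hfib b).symm), f.2 b]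
  have hcard : (Fintype.card α)! = Nat.card {f // P f} * ∏ b, (c b)! := by
    have h1 : Nat.card (Equiv.Perm α) = (Fintype.card α)! := by
      rw [Nat.card_eq_fintype_card, Fintype.card_perm]
    rw [← h1, Nat.card_congr key, Nat.card_eq_fintype_card, Fintype.card_sigma]
    have e : ∀ f : {f // P f}, Fintype.card {σ : Equiv.Perm α // ∀ a, g₀ (σ a) = f.1 a}
        = ∏ b, (c b)! := fun f => by rw [← Nat.card_eq_fintype_card]; exact hfibcard f
    rw [Finset.sum_congr rfl fun f _ => e f, Finset.sum_const, smul_eq_mul,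
      Finset.card_univ, ← Nat.card_eq_fintype_card]
  have hpos : 0 < ∏ b, (c b)! := Finset.prod_pos fun b _ => Nat.factorial_pos _
  have hspec : (∏ b, (c b)!) * Nat.multinomial Finset.univ c = (Fintype.card α)! := by
    rw [Nat.multinomial_spec, h]
  refine Nat.eq_of_mul_eq_mul_right hpos ?_
  rw [mul_comm (Nat.multinomial Finset.univ c), hspec]
  exact hcard.symm

end helpers

/-- restriction of functions to the fibers of `τ`. -/
def restrictEquiv {n k : ℕ} (τ : Fin n → Fin k) (γ : Type*) :
    (Fin n → γ) ≃ ∀ i : Fin k, ({v : Fin n // τ v = i} → γ) where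
  toFun f i v := f v.1
  invFun g v := g (τ v) ⟨v, rfl⟩
  left_inv f := rfl
  right_inv g := by
    funext i v
    obtain ⟨v, rfl⟩ := v
    rfl

/-- Paper formula (Dtheorem2): the number of permutations `σ` of `Fin n` with prescribed
counts `s' j i = #{v | τ v = i ∧ δ (σ v) = j}` equals
`(∏_i n_i!) · ∏_j (s_j! / ∏_i (s' j i)!)`, each factor being a multinomial coefficient
(so the division is exact). -/
theorem count_labeling_sets
    (n k m : ℕ) (τ : Fin n → Fin k) (δ : Fin n → Fin m)
    (ncount : Fin k → ℕ) (hn : ∀ i, ncount i = Nat.card {v : Fin n // τ v = i})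
    (scount : Fin m → ℕ) (hs : ∀ j, scount j = Nat.card {v : Fin n // δ v = j})
    (s' : Fin m → Fin k → ℕ)
    (hrow : ∀ j, ∑ i, s' j i = scount j)
    (hcol : ∀ i, ∑ j, s' j i = ncount i) :
    (∀ j, (∏ i, (s' j i).factorial) ∣ (scount j).factorial) ∧
    Nat.card {σ : Equiv.Perm (Fin n) // ∀ (i : Fin k) (j : Fin m),
        Nat.card {v : Fin n // τ v = i ∧ δ (σ v) = j} = s' j i} =
      (∏ i, (ncount i).factorial) * ∏ j, Nat.multinomial Finset.univ (s' j) := by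
  classical
  constructor
  · intro j
    rw [← hrow j]
    exact Nat.prod_factorial_dvd_factorial_sum _ _
  set C : (Fin n → Fin m) → Prop :=
    fun f => ∀ (i : Fin k) (j : Fin m), Nat.card {v : Fin n // τ v = i ∧ f v = j} = s' j i
    with hC
  -- Step 0: rewrite the condition on σ as C (δ ∘ σ)
  have step0 : {σ : Equiv.Perm (Fin n) // ∀ (i : Fin k) (j : Fin m),
        Nat.card {v : Fin n // τ v = i ∧ δ (σ v) = j} = s' j i}
      ≃ {σ : Equiv.Perm (Fin n) // C (δ ∘ σ)} :=
    Equiv.subtypeEquivRight fun σ => Iff.rfl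
  -- Step 1: decompose over f := δ ∘ σ
  have step1 : {σ : Equiv.Perm (Fin n) // C (δ ∘ σ)}
      ≃ Σ f : {f // C f}, {σ : Equiv.Perm (Fin n) // ∀ v, δ (σ v) = f.1 v} :=
    (subtypeSigmaFiber (fun σ : Equiv.Perm (Fin n) => δ ∘ σ) C).trans
      (Equiv.sigmaCongrRight fun f => Equiv.subtypeEquivRight fun σ => funext_iff)
  -- fibers of each f satisfying C have sizes scount
  have ffib : ∀ f : Fin n → Fin m, C f → ∀ j, Nat.card {v // f v = j} = scount j := by
    intro f hf j
    have e1 : {v // f v = j} ≃ Σ i : Fin k, {v : {v // f v = j} // τ v.1 = i} :=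
      (Equiv.sigmaFiberEquiv (fun v : {v // f v = j} => τ v.1)).symm
    have e2 : ∀ i, {v : {v // f v = j} // τ v.1 = i} ≃ {v : Fin n // τ v = i ∧ f v = j} :=
      fun i => (Equiv.subtypeSubtypeEquivSubtypeInter (fun v => f v = j) (fun v => τ v = i)).trans
        (Equiv.subtypeEquivRight fun v => and_comm)
    rw [Nat.card_congr (e1.trans (Equiv.sigmaCongrRight e2)), Nat.card_eq_fintype_card,
      Fintype.card_sigma, ← hrow j]
    refine Finset.sum_congr rfl fun i _ => ?_
    rw [← hf i j, Nat.card_eq_fintype_card]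
  -- each fiber of step1 has cardinality ∏ j, (scount j)!
  have fibcard : ∀ f : {f // C f},
      Nat.card {σ : Equiv.Perm (Fin n) // ∀ v, δ (σ v) = f.1 v} = ∏ j, (scount j)! := by
    intro f
    rw [Nat.card_congr (permCompEquiv δ f.1), Nat.card_pi]
    refine Finset.prod_congr rfl fun j _ => ?_
    rw [natCard_equiv ((ffib f.1 f.2 j).trans (hs j)), ffib f.1 f.2 j]
  -- Step 2: count functions satisfying C
  have step2 : {f // C f} ≃ ∀ i : Fin k,
      {g : {v : Fin n // τ v = i} → Fin m // ∀ j, Nat.card {v // g v = j} = s' j i} := by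
    refine ((restrictEquiv τ (Fin m)).subtypeEquiv ?_).trans
      (Equiv.subtypePiEquivPi (p := fun (i : Fin k) (g : {v : Fin n // τ v = i} → Fin m) =>
        ∀ j, Nat.card {v // g v = j} = s' j i))
    intro f
    constructor
    · intro hf i j
      have e : {v : {v : Fin n // τ v = i} // f v.1 = j} ≃ {v : Fin n // τ v = i ∧ f v = j} :=
        Equiv.subtypeSubtypeEquivSubtypeInter (fun v => τ v = i) (fun v => f v = j)
      exact (Nat.card_congr e).trans (hf i j)
    · intro hg i j
      have e : {v : {v : Fin n // τ v = i} // f v.1 = j} ≃ {v : Fin n // τ v = i ∧ f v = j} :=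
        Equiv.subtypeSubtypeEquivSubtypeInter (fun v => τ v = i) (fun v => f v = j)
      exact (Nat.card_congr e.symm).trans (hg i j)
  have cardC : Nat.card {f // C f} = ∏ i, Nat.multinomial Finset.univ (fun j => s' j i) := by
    rw [Nat.card_congr step2, Nat.card_pi]
    refine Finset.prod_congr rfl fun i _ => ?_
    exact card_fiber_functions _ (by
      rw [hcol i, hn i, Nat.card_eq_fintype_card])
  -- put it together
  have main : Nat.card {σ : Equiv.Perm (Fin n) // ∀ (i : Fin k) (j : Fin m),
        Nat.card {v : Fin n // τ v = i ∧ δ (σ v) = j} = s' j i}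
      = (∏ i, Nat.multinomial Finset.univ (fun j => s' j i)) * ∏ j, (scount j)! := by
    rw [Nat.card_congr (step0.trans step1), Nat.card_eq_fintype_card, Fintype.card_sigma]
    have e : ∀ f : {f // C f}, Fintype.card {σ : Equiv.Perm (Fin n) // ∀ v, δ (σ v) = f.1 v}
        = ∏ j, (scount j)! := fun f => by rw [← Nat.card_eq_fintype_card]; exact fibcard f
    rw [Finset.sum_congr rfl fun f _ => e f, Finset.sum_const, smul_eq_mul,
      Finset.card_univ, ← Nat.card_eq_fintype_card, cardC]
  rw [main]
  -- final arithmetic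
  have hP : 0 < ∏ i, ∏ j, (s' j i)! :=
    Finset.prod_pos fun i _ => Finset.prod_pos fun j _ => Nat.factorial_pos _
  have h1 : ∀ i : Fin k, Nat.multinomial Finset.univ (fun j => s' j i) * ∏ j, (s' j i)!
      = (ncount i)! := fun i => by rw [mul_comm, Nat.multinomial_spec, hcol i]
  have h2 : ∀ j : Fin m, Nat.multinomial Finset.univ (s' j) * ∏ i, (s' j i)!
      = (scount j)! := fun j => by rw [mul_comm, Nat.multinomial_spec, hrow j]
  have hPcomm : (∏ i : Fin k, ∏ j : Fin m, (s' j i)!) = ∏ j : Fin m, ∏ i : Fin k, (s' j i)! :=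
    Finset.prod_comm
  refine Nat.eq_of_mul_eq_mul_right hP ?_
  rw [mul_right_comm, ← Finset.prod_mul_distrib, mul_assoc, hPcomm, ← Finset.prod_mul_distrib,
    Finset.prod_congr rfl fun i _ => h1 i, Finset.prod_congr rfl fun j _ => h2 j]
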